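/- arXiv:1603.08213 — 3 statements merged into one kernel-verified Lean document; each statement's English description precedes it below -/
import Mathlib

section
/- A CNOT gate G₂ whose active wire is not a wire of gate G₁, and whose control wires do not include the active wire of G₁, commutes with G₁: executing G₁;G₂ equals executing G₂;G₁ on every valuation. -/
set_option autoImplicit true
set_option maxHeartbeats 1000000

/-- A multi-controlled-not gate: an active wire and a list of controls
(wire, polarity). -/
structure Gate where
  active : ℕ
  controls : List (ℕ × Bool)

/-- Well-formedness: no control wire coincides with the active wire. -/
def Gate.wf (g : Gate) : Prop := ∀ c ∈ g.controls, c.1 ≠ g.active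

/-- The set of wires of a gate. -/
def Gate.wires (g : Gate) : Set ℕ := insert g.active {w | ∃ b, (w, b) ∈ g.controls}

/-- Value of a control `(j, b)` on a valuation `v` : `v j XOR b XOR true`. -/
def ctrlVal (v : ℕ → Bool) (c : ℕ × Bool) : Bool := Bool.xor (v c.1) (Bool.xor c.2 true)

/-- Execution of a gate on a valuation. -/
def execGate (g : Gate) (v : ℕ → Bool) : ℕ → Bool := fun l =>
  if l = g.active then
    if g.controls.isEmpty then !(v l)
    else Bool.xor (v l) (g.controls.all (ctrlVal v))
  else v l

/-- Execution of a list of gates, in order. -/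
def execCircuit (C : List Gate) (v : ℕ → Bool) : ℕ → Bool :=
  C.foldl (fun v g => execGate g v) v

/-- Wires of a circuit. -/
def circuitWires (C : List Gate) : Set ℕ := {w | ∃ g ∈ C, w ∈ g.wires}

lemma all_ctrl_congr (L : List (ℕ × Bool)) (v w : ℕ → Bool)
    (h : ∀ c ∈ L, v c.1 = w c.1) :
    L.all (ctrlVal v) = L.all (ctrlVal w) := by
  induction L with
  | nil => rfl
  | cons c t ih =>
    simp only [List.all_cons]
    rw [ih (fun c hc => h c (List.mem_cons_of_mem _ hc))]
    simp [ctrlVal, h c List.mem_cons_self]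

/-- a gate G₂ whose active wire is not a wire of G₁ and whose
control wires do not include the active wire of G₁ commutes with G₁. -/
theorem gates_semi_disjoint_comm (g₁ g₂ : Gate)
    (h1 : g₂.active ∉ g₁.wires)
    (h2 : ∀ b : Bool, (g₁.active, b) ∉ g₂.controls)
    (v : ℕ → Bool) :
    execGate g₂ (execGate g₁ v) = execGate g₁ (execGate g₂ v) := by
  have hne : g₂.active ≠ g₁.active := by
    intro h; exact h1 (by simp [Gate.wires, h])
  have hnc1 : ∀ c ∈ g₁.controls, c.1 ≠ g₂.active := by
    intro c hc h
    exact h1 (Or.inr ⟨c.2, by simpa [← h] using hc⟩)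
  have hnc2 : ∀ c ∈ g₂.controls, c.1 ≠ g₁.active := by
    intro c hc h
    exact h2 c.2 (by simpa [← h] using hc)
  -- values seen by g₂'s controls are unchanged by g₁
  have e2 : g₂.controls.all (ctrlVal (execGate g₁ v)) = g₂.controls.all (ctrlVal v) := by
    apply all_ctrl_congr
    intro c hc
    simp [execGate, hnc2 c hc]
  have e1 : g₁.controls.all (ctrlVal (execGate g₂ v)) = g₁.controls.all (ctrlVal v) := by
    apply all_ctrl_congr
    intro c hc
    simp [execGate, hnc1 c hc]
  funext l
  by_cases hl2 : l = g₂.active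
  · subst hl2
    simp [execGate, hne, e2]
  · by_cases hl1 : l = g₁.active
    · subst hl1
      simp [execGate, hl2, Ne.symm hne, e1]
    · simp [execGate, hl1, hl2]
end

section
/- Type preservation for the circuit-generating abstract machine: if p₁:bit, ..., p_{#L}:bit ⊢ M : bit^m holds, (M, RC, L) is an abstract machine state, and (M, RC, L) →_am (N, RC', L'), then p₁:bit, ..., p_{#L'}:bit ⊢ N : bit^m. -/
set_option autoImplicit true
set_option maxHeartbeats 1000000


/-! ## The language PCF^list -/

/-- Types of PCF^list. -/
inductive Ty : Type
  | bit : Ty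
  | unit : Ty
  | arrow : Ty → Ty → Ty
  | prod : Ty → Ty → Ty
  | sum : Ty → Ty → Ty
  | list : Ty → Ty

/-- Terms of PCF^list, with de Bruijn indices. -/
inductive Tm : Type
  | var : ℕ → Tm
  | lam : Tm → Tm
  | app : Tm → Tm → Tm
  | pair : Tm → Tm → Tm
  | fst : Tm → Tm
  | snd : Tm → Tm
  | skip : Tm
  | letUnit : Tm → Tm → Tm           -- let skip = M in N
  | tt : Tm
  | ff : Tm
  | ite : Tm → Tm → Tm → Tm
  | notOp : Tm
  | andOp : Tm
  | xorOp : Tm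
  | inl : Tm → Tm
  | inr : Tm → Tm
  | matchSum : Tm → Tm → Tm → Tm     -- match P with inl x ↦ M | inr y ↦ N
  | split : Tm
  | fix : Tm → Tm                    -- the fixpoint operator Y
  | err : Tm

/-- Boolean constants as terms. -/
def ofBool : Bool → Tm
  | true => .tt
  | false => .ff

/-- Shift the free variables `≥ c` of a term by `k`. -/
def liftTm (k : ℕ) : ℕ → Tm → Tm
  | c, .var n => if n < c then .var n else .var (n + k)
  | c, .lam M => .lam (liftTm k (c+1) M)
  | c, .app M N => .app (liftTm k c M) (liftTm k c N)
  | c, .pair M N => .pair (liftTm k c M) (liftTm k c N)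
  | c, .fst M => .fst (liftTm k c M)
  | c, .snd M => .snd (liftTm k c M)
  | c, .letUnit M N => .letUnit (liftTm k c M) (liftTm k c N)
  | c, .ite P M N => .ite (liftTm k c P) (liftTm k c M) (liftTm k c N)
  | c, .inl M => .inl (liftTm k c M)
  | c, .inr M => .inr (liftTm k c M)
  | c, .matchSum P M N =>
      .matchSum (liftTm k c P) (liftTm k (c+1) M) (liftTm k (c+1) N)
  | c, .fix M => .fix (liftTm k c M)
  | _, t => t

/-- Capture-avoiding substitution of `N` for the variable `j`. -/
def subst (N : Tm) : ℕ → Tm → Tm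
  | j, .var n => if n = j then liftTm j 0 N
                 else if j < n then .var (n - 1) else .var n
  | j, .lam M => .lam (subst N (j+1) M)
  | j, .app M P => .app (subst N j M) (subst N j P)
  | j, .pair M P => .pair (subst N j M) (subst N j P)
  | j, .fst M => .fst (subst N j M)
  | j, .snd M => .snd (subst N j M)
  | j, .letUnit M P => .letUnit (subst N j M) (subst N j P)
  | j, .ite P M Q => .ite (subst N j P) (subst N j M) (subst N j Q)
  | j, .inl M => .inl (subst N j M)
  | j, .inr M => .inr (subst N j M)
  | j, .matchSum P M Q =>
      .matchSum (subst N j P) (subst N (j+1) M) (subst N (j+1) Q)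
  | j, .fix M => .fix (subst N j M)
  | _, t => t

/-- First-order types. -/
inductive FirstOrder : Ty → Prop
  | bit : FirstOrder .bit
  | prod {A B} : FirstOrder A → FirstOrder B → FirstOrder (.prod A B)
  | list {A} : FirstOrder A → FirstOrder (.list A)

/-- Type equality generated by the coercion between `[A]` and
`1 ⊕ (A × [A])`. -/
inductive TyEq : Ty → Ty → Prop
  | refl (A) : TyEq A A
  | symm {A B} : TyEq A B → TyEq B A
  | trans {A B C} : TyEq A B → TyEq B C → TyEq A C
  | fold (A) : TyEq (.sum .unit (.prod A (.list A))) (.list A)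
  | arrow {A A' B B'} : TyEq A A' → TyEq B B' → TyEq (.arrow A B) (.arrow A' B')
  | prod {A A' B B'} : TyEq A A' → TyEq B B' → TyEq (.prod A B) (.prod A' B')
  | sum {A A' B B'} : TyEq A A' → TyEq B B' → TyEq (.sum A B) (.sum A' B')
  | list {A A'} : TyEq A A' → TyEq (.list A) (.list A')

/-- Typing judgment of PCF^list (contexts are lists of types, de Bruijn). -/
inductive HasType : List Ty → Tm → Ty → Prop
  | var {Δ n A} : Δ[n]? = some A → HasType Δ (.var n) A
  | lam {Δ A B M} : HasType (A :: Δ) M B → HasType Δ (.lam M) (.arrow A B)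
  | app {Δ M N A B} : HasType Δ M (.arrow A B) → HasType Δ N A →
      HasType Δ (.app M N) B
  | pair {Δ M N A B} : HasType Δ M A → HasType Δ N B →
      HasType Δ (.pair M N) (.prod A B)
  | fst {Δ M A B} : HasType Δ M (.prod A B) → HasType Δ (.fst M) A
  | snd {Δ M A B} : HasType Δ M (.prod A B) → HasType Δ (.snd M) B
  | skip {Δ} : HasType Δ .skip .unit
  | letUnit {Δ M N B} : HasType Δ M .unit → HasType Δ N B →
      HasType Δ (.letUnit M N) B
  | tt {Δ} : HasType Δ .tt .bit
  | ff {Δ} : HasType Δ .ff .bit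
  | ite {Δ P M N C} : HasType Δ P .bit → HasType Δ M C → HasType Δ N C →
      FirstOrder C → HasType Δ (.ite P M N) C
  | notOp {Δ} : HasType Δ .notOp (.arrow .bit .bit)
  | andOp {Δ} : HasType Δ .andOp (.arrow (.prod .bit .bit) .bit)
  | xorOp {Δ} : HasType Δ .xorOp (.arrow (.prod .bit .bit) .bit)
  | inl {Δ M A B} : HasType Δ M A → HasType Δ (.inl M) (.sum A B)
  | inr {Δ M A B} : HasType Δ M B → HasType Δ (.inr M) (.sum A B)
  | matchSum {Δ P M N A B C} : HasType Δ P (.sum A B) →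
      HasType (A :: Δ) M C → HasType (B :: Δ) N C →
      HasType Δ (.matchSum P M N) C
  | split {Δ A} :
      HasType Δ .split (.arrow (.list A) (.sum .unit (.prod A (.list A))))
  | fix {Δ M A} : HasType Δ M (.arrow A A) → HasType Δ (.fix M) A
  | err {Δ A} : HasType Δ .err A
  | conv {Δ M A B} : HasType Δ M A → TyEq A B → HasType Δ M B

/-- Values. -/
inductive Value : Tm → Prop
  | lam (M) : Value (.lam M)
  | pair {M N} : Value M → Value N → Value (.pair M N)
  | inl {M} : Value M → Value (.inl M)
  | inr {M} : Value M → Value (.inr M)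
  | skip : Value .skip
  | tt : Value .tt
  | ff : Value .ff
  | notOp : Value .notOp
  | andOp : Value .andOp
  | xorOp : Value .xorOp
  | split : Value .split

/-- The predicate "contains the error term Err as a subterm". -/
inductive ContainsErr : Tm → Prop
  | err : ContainsErr .err
  | lam {M} : ContainsErr M → ContainsErr (.lam M)
  | appL {M N} : ContainsErr M → ContainsErr (.app M N)
  | appR {M N} : ContainsErr N → ContainsErr (.app M N)
  | pairL {M N} : ContainsErr M → ContainsErr (.pair M N)
  | pairR {M N} : ContainsErr N → ContainsErr (.pair M N)
  | fst {M} : ContainsErr M → ContainsErr (.fst M)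
  | snd {M} : ContainsErr M → ContainsErr (.snd M)
  | letL {M N} : ContainsErr M → ContainsErr (.letUnit M N)
  | letR {M N} : ContainsErr N → ContainsErr (.letUnit M N)
  | ite1 {P M N} : ContainsErr P → ContainsErr (.ite P M N)
  | ite2 {P M N} : ContainsErr M → ContainsErr (.ite P M N)
  | ite3 {P M N} : ContainsErr N → ContainsErr (.ite P M N)
  | inl {M} : ContainsErr M → ContainsErr (.inl M)
  | inr {M} : ContainsErr M → ContainsErr (.inr M)
  | match1 {P M N} : ContainsErr P → ContainsErr (.matchSum P M N)
  | match2 {P M N} : ContainsErr M → ContainsErr (.matchSum P M N)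
  | match3 {P M N} : ContainsErr N → ContainsErr (.matchSum P M N)
  | fix {M} : ContainsErr M → ContainsErr (.fix M)

/-- Small-step reduction of PCF^list, closed under reduction of subterms. -/
inductive Step : Tm → Tm → Prop
  | beta (M N) : Step (.app (.lam M) N) (subst N 0 M)
  | fstPair (M N) : Step (.fst (.pair M N)) M
  | sndPair (M N) : Step (.snd (.pair M N)) N
  | letU (M) : Step (.letUnit .skip M) M
  | iteTt (M N) : Step (.ite .tt M N) M
  | iteFf (M N) : Step (.ite .ff M N) N
  | splitRed (M) : Step (.app .split M) M
  | matchInl (P M N) : Step (.matchSum (.inl P) M N) (subst P 0 M)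
  | matchInr (P M N) : Step (.matchSum (.inr P) M N) (subst P 0 N)
  | fixRed (M) : Step (.fix M) (.app M (.fix M))
  | notRed (b) : Step (.app .notOp (ofBool b)) (ofBool (!b))
  | andRed (a b) : Step (.app .andOp (.pair (ofBool a) (ofBool b))) (ofBool (a && b))
  | xorRed (a b) : Step (.app .xorOp (.pair (ofBool a) (ofBool b)))
      (ofBool (Bool.xor a b))
  | lamC {M M'} : Step M M' → Step (.lam M) (.lam M')
  | appL {M M' N} : Step M M' → Step (.app M N) (.app M' N)
  | appR {M N N'} : Step N N' → Step (.app M N) (.app M N')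
  | pairL {M M' N} : Step M M' → Step (.pair M N) (.pair M' N)
  | pairR {M N N'} : Step N N' → Step (.pair M N) (.pair M N')
  | fstC {M M'} : Step M M' → Step (.fst M) (.fst M')
  | sndC {M M'} : Step M M' → Step (.snd M) (.snd M')
  | letL {M M' N} : Step M M' → Step (.letUnit M N) (.letUnit M' N)
  | letR {M N N'} : Step N N' → Step (.letUnit M N) (.letUnit M N')
  | ite1 {P P' M N} : Step P P' → Step (.ite P M N) (.ite P' M N)
  | ite2 {P M M' N} : Step M M' → Step (.ite P M N) (.ite P M' N)
  | ite3 {P M N N'} : Step N N' → Step (.ite P M N) (.ite P M N')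
  | inlC {M M'} : Step M M' → Step (.inl M) (.inl M')
  | inrC {M M'} : Step M M' → Step (.inr M) (.inr M')
  | match1 {P P' M N} : Step P P' → Step (.matchSum P M N) (.matchSum P' M N)
  | match2 {P M M' N} : Step M M' → Step (.matchSum P M N) (.matchSum P M' N)
  | match3 {P M N N'} : Step N N' → Step (.matchSum P M N) (.matchSum P M N')
  | fixC {M M'} : Step M M' → Step (.fix M) (.fix M')

/-- The type `bit^m` (right-nested products of `bit`). -/
def bitPow : ℕ → Ty
  | 0 => .unit
  | 1 => .bit
  | n + 2 => .prod .bit (bitPow (n + 1))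

/-! ## The circuit-generating abstract machine

The state of the machine is a term `M` (whose free variables, the linked
variables `p₀, p₁, …`, appear at depth `d` as de Bruijn indices `d + j`),
a raw circuit `C` (a list of gates, most recent first, so that the circuit
is executed in reverse list order), an input wire set `I`, and a linking
function `L : List ℕ` mapping the machine variable `j` to the wire `L[j]`. -/

/-- Execution of a machine circuit: the gates of `C` are executed in
reverse list order (gates are prepended as they are generated). -/
def runCircuit (C : List Gate) (v : ℕ → Bool) : ℕ → Bool :=
  C.foldr execGate v

/-- A wire is fresh for the machine state when it is neither an input wire,
nor a wire of the circuit, nor in the range of the linking function. -/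
def FreshWire (I : Finset ℕ) (C : List Gate) (L : List ℕ) (w : ℕ) : Prop :=
  w ∉ I ∧ w ∉ circuitWires C ∧ w ∉ L

/-- First-order extensions of the linking function `L`, at depth `d`:
linked variables, products of extensions, and lists of extensions. -/
inductive FOExt (d : ℕ) (L : List ℕ) : Tm → Prop
  | var {j} : j < L.length → FOExt d L (.var (d + j))
  | pair {M N} : FOExt d L M → FOExt d L N → FOExt d L (.pair M N)
  | nil : FOExt d L (.inl .skip)
  | cons {M N} : FOExt d L M → FOExt d L N → FOExt d L (.inr (.pair M N))

/-- `IteAux d L n V W U n' ps` : the branches `V` and `W` are first-order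
extensions of `L` with the same shape; `U` is the first-order extension of
the same shape whose variables are the fresh machine variables
`n, n+1, …, n'-1` (pairwise distinct, occurring at depth `d`), and `ps`
collects, in order, the pairs of wires of the corresponding variables of
`V` and `W`. -/
inductive IteAux (d : ℕ) (L : List ℕ) : ℕ → Tm → Tm → Tm → ℕ → List (ℕ × ℕ) → Prop
  | var {n j k} (hj : j < L.length) (hk : k < L.length) :
      IteAux d L n (.var (d + j)) (.var (d + k)) (.var (d + n)) (n + 1)
        [(L.getD j 0, L.getD k 0)]
  | pair {n V₁ W₁ U₁ n₁ p₁ V₂ W₂ U₂ n₂ p₂} :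
      IteAux d L n V₁ W₁ U₁ n₁ p₁ → IteAux d L n₁ V₂ W₂ U₂ n₂ p₂ →
      IteAux d L n (.pair V₁ V₂) (.pair W₁ W₂) (.pair U₁ U₂) n₂ (p₁ ++ p₂)
  | nil {n} : IteAux d L n (.inl .skip) (.inl .skip) (.inl .skip) n []
  | cons {n V₁ W₁ U₁ n₁ p₁ V₂ W₂ U₂ n₂ p₂} :
      IteAux d L n V₁ W₁ U₁ n₁ p₁ → IteAux d L n₁ V₂ W₂ U₂ n₂ p₂ →
      IteAux d L n (.inr (.pair V₁ V₂)) (.inr (.pair W₁ W₂))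
        (.inr (.pair U₁ U₂)) n₂ (p₁ ++ p₂)

/-- The gates generated by an if-then-else on the wire `pw`: for each fresh
wire `u` and corresponding pair `(a, b)` of wires of the two branches, the
gates CNOT(u; (pw,true),(a,true)) and CNOT(u; (pw,false),(b,true)),
in generation order. -/
def iteGates (pw : ℕ) : List ℕ → List (ℕ × ℕ) → List Gate
  | u :: us, (a, b) :: ps =>
      ⟨u, [(pw, true), (a, true)]⟩ :: ⟨u, [(pw, false), (b, true)]⟩ ::
        iteGates pw us ps
  | _, _ => []

/-- The rewrite relation `→_am` on circuit-generating abstract machines.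
`AMStep I d M C L N C' L'` : at binder depth `d`, the machine
`(M, (I, C), L)` rewrites to `(N, (I, C'), L')`.  The generic rules leave
the circuit untouched; the rules for booleans record gates in the circuit
and allocate fresh wires; the relation is closed under arbitrary
beta-contexts. -/
inductive AMStep (I : Finset ℕ) : ℕ → Tm → List Gate → List ℕ →
    Tm → List Gate → List ℕ → Prop
  /- generic rules -/
  | beta (d M N C L) : AMStep I d (.app (.lam M) N) C L (subst N 0 M) C L
  | fstPair (d M N C L) : AMStep I d (.fst (.pair M N)) C L M C L
  | sndPair (d M N C L) : AMStep I d (.snd (.pair M N)) C L N C L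
  | letU (d M C L) : AMStep I d (.letUnit .skip M) C L M C L
  | splitRed (d M C L) : AMStep I d (.app .split M) C L M C L
  | matchInl (d P M N C L) :
      AMStep I d (.matchSum (.inl P) M N) C L (subst P 0 M) C L
  | matchInr (d P M N C L) :
      AMStep I d (.matchSum (.inr P) M N) C L (subst P 0 N) C L
  | fixRed (d M C L) : AMStep I d (.fix M) C L (.app M (.fix M)) C L
  /- rules for booleans -/
  | ffRed (d C L w) (hw : FreshWire I C L w) :
      AMStep I d .ff C L (.var (d + L.length)) C (L ++ [w])
  | ttRed (d C L w) (hw : FreshWire I C L w) :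
      AMStep I d .tt C L (.var (d + L.length)) (⟨w, []⟩ :: C) (L ++ [w])
  | notRed (d C L j w) (hj : j < L.length) (hw : FreshWire I C L w) :
      AMStep I d (.app .notOp (.var (d + j))) C L (.var (d + L.length))
        (⟨w, [(L.getD j 0, false)]⟩ :: C) (L ++ [w])
  | andRed (d C L j k w) (hj : j < L.length) (hk : k < L.length)
      (hw : FreshWire I C L w) :
      AMStep I d (.app .andOp (.pair (.var (d + j)) (.var (d + k)))) C L
        (.var (d + L.length))
        (⟨w, [(L.getD j 0, true), (L.getD k 0, true)]⟩ :: C) (L ++ [w])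
  | xorRed (d C L j k w) (hj : j < L.length) (hk : k < L.length)
      (hw : FreshWire I C L w) :
      AMStep I d (.app .xorOp (.pair (.var (d + j)) (.var (d + k)))) C L
        (.var (d + L.length))
        (⟨w, [(L.getD j 0, true)]⟩ :: ⟨w, [(L.getD k 0, true)]⟩ :: C)
        (L ++ [w])
  | iteRed (d C L j V W U n ps ws) (hj : j < L.length)
      (ha : IteAux d L L.length V W U n ps)
      (hlen : ws.length = ps.length) (hnd : ws.Nodup)
      (hfr : ∀ w ∈ ws, FreshWire I C L w) :
      AMStep I d (.ite (.var (d + j)) V W) C L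
        U ((iteGates (L.getD j 0) ws ps).reverse ++ C) (L ++ ws)
  | iteErr (d C L j V W) (hj : j < L.length)
      (hV : FOExt d L V) (hW : FOExt d L W)
      (hns : ¬ ∃ U n ps, IteAux d L L.length V W U n ps) :
      AMStep I d (.ite (.var (d + j)) V W) C L .err C L
  /- closure under beta-contexts -/
  | lamC {d M C L M' C' L'} : AMStep I (d+1) M C L M' C' L' →
      AMStep I d (.lam M) C L (.lam M') C' L'
  | appL {d M C L M' C' L'} (N) : AMStep I d M C L M' C' L' →
      AMStep I d (.app M N) C L (.app M' N) C' L'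
  | appR {d N C L N' C' L'} (M) : AMStep I d N C L N' C' L' →
      AMStep I d (.app M N) C L (.app M N') C' L'
  | pairL {d M C L M' C' L'} (N) : AMStep I d M C L M' C' L' →
      AMStep I d (.pair M N) C L (.pair M' N) C' L'
  | pairR {d N C L N' C' L'} (M) : AMStep I d N C L N' C' L' →
      AMStep I d (.pair M N) C L (.pair M N') C' L'
  | fstC {d M C L M' C' L'} : AMStep I d M C L M' C' L' →
      AMStep I d (.fst M) C L (.fst M') C' L'
  | sndC {d M C L M' C' L'} : AMStep I d M C L M' C' L' →
      AMStep I d (.snd M) C L (.snd M') C' L'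
  | letL {d M C L M' C' L'} (N) : AMStep I d M C L M' C' L' →
      AMStep I d (.letUnit M N) C L (.letUnit M' N) C' L'
  | letR {d N C L N' C' L'} (M) : AMStep I d N C L N' C' L' →
      AMStep I d (.letUnit M N) C L (.letUnit M N') C' L'
  | ite1 {d P C L P' C' L'} (M N) : AMStep I d P C L P' C' L' →
      AMStep I d (.ite P M N) C L (.ite P' M N) C' L'
  | ite2 {d M C L M' C' L'} (P N) : AMStep I d M C L M' C' L' →
      AMStep I d (.ite P M N) C L (.ite P M' N) C' L'
  | ite3 {d N C L N' C' L'} (P M) : AMStep I d N C L N' C' L' →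
      AMStep I d (.ite P M N) C L (.ite P M N') C' L'
  | inlC {d M C L M' C' L'} : AMStep I d M C L M' C' L' →
      AMStep I d (.inl M) C L (.inl M') C' L'
  | inrC {d M C L M' C' L'} : AMStep I d M C L M' C' L' →
      AMStep I d (.inr M) C L (.inr M') C' L'
  | match1 {d P C L P' C' L'} (M N) : AMStep I d P C L P' C' L' →
      AMStep I d (.matchSum P M N) C L (.matchSum P' M N) C' L'
  | match2 {d M C L M' C' L'} (P N) : AMStep I (d+1) M C L M' C' L' →
      AMStep I d (.matchSum P M N) C L (.matchSum P M' N) C' L'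
  | match3 {d N C L N' C' L'} (P M) : AMStep I (d+1) N C L N' C' L' →
      AMStep I d (.matchSum P M N) C L (.matchSum P M N') C' L'
  | fixC {d M C L M' C' L'} : AMStep I d M C L M' C' L' →
      AMStep I d (.fix M) C L (.fix M') C' L'

/-- `→_am` on machine states (term, circuit, linking function), at top
level (depth 0). -/
def AMStepT (I : Finset ℕ) (s t : Tm × List Gate × List ℕ) : Prop :=
  AMStep I 0 s.1 s.2.1 s.2.2 t.1 t.2.1 t.2.2

/-! ## Auxiliary lemmas for type preservation -/

section AuxPreservation

/-- Domain extractor, respecting `TyEq`. -/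
def domF : Ty → Ty
  | .arrow A _ => A
  | T => T

def codF : Ty → Ty
  | .arrow _ B => B
  | T => T

def prodF1 : Ty → Ty
  | .prod A _ => A
  | T => T

def prodF2 : Ty → Ty
  | .prod _ B => B
  | T => T

def sumF1 : Ty → Ty
  | .sum A _ => A
  | .list _ => .unit
  | T => T

def sumF2 : Ty → Ty
  | .sum _ B => B
  | .list A => .prod A (.list A)
  | T => T

lemma TyEq.domF_congr {S T : Ty} (h : TyEq S T) : TyEq (domF S) (domF T) := by
  induction h with
  | refl A => exact .refl _
  | symm _ ih => exact ih.symm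
  | trans _ _ ih1 ih2 => exact ih1.trans ih2
  | fold A => exact .fold A
  | arrow h1 _ _ _ => exact h1
  | prod h1 h2 _ _ => exact .prod h1 h2
  | sum h1 h2 _ _ => exact .sum h1 h2
  | list h _ => exact .list h

lemma TyEq.codF_congr {S T : Ty} (h : TyEq S T) : TyEq (codF S) (codF T) := by
  induction h with
  | refl A => exact .refl _
  | symm _ ih => exact ih.symm
  | trans _ _ ih1 ih2 => exact ih1.trans ih2
  | fold A => exact .fold A
  | arrow _ h2 _ _ => exact h2
  | prod h1 h2 _ _ => exact .prod h1 h2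
  | sum h1 h2 _ _ => exact .sum h1 h2
  | list h _ => exact .list h

lemma TyEq.prodF1_congr {S T : Ty} (h : TyEq S T) : TyEq (prodF1 S) (prodF1 T) := by
  induction h with
  | refl A => exact .refl _
  | symm _ ih => exact ih.symm
  | trans _ _ ih1 ih2 => exact ih1.trans ih2
  | fold A => exact .fold A
  | arrow h1 h2 _ _ => exact .arrow h1 h2
  | prod h1 _ _ _ => exact h1
  | sum h1 h2 _ _ => exact .sum h1 h2
  | list h _ => exact .list h

lemma TyEq.prodF2_congr {S T : Ty} (h : TyEq S T) : TyEq (prodF2 S) (prodF2 T) := by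
  induction h with
  | refl A => exact .refl _
  | symm _ ih => exact ih.symm
  | trans _ _ ih1 ih2 => exact ih1.trans ih2
  | fold A => exact .fold A
  | arrow h1 h2 _ _ => exact .arrow h1 h2
  | prod _ h2 _ _ => exact h2
  | sum h1 h2 _ _ => exact .sum h1 h2
  | list h _ => exact .list h

lemma TyEq.sumF1_congr {S T : Ty} (h : TyEq S T) : TyEq (sumF1 S) (sumF1 T) := by
  induction h with
  | refl A => exact .refl _
  | symm _ ih => exact ih.symm
  | trans _ _ ih1 ih2 => exact ih1.trans ih2
  | fold A => exact .refl _
  | arrow h1 h2 _ _ => exact .arrow h1 h2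
  | prod h1 h2 _ _ => exact .prod h1 h2
  | sum h1 _ _ _ => exact h1
  | list _ _ => exact .refl _

lemma TyEq.sumF2_congr {S T : Ty} (h : TyEq S T) : TyEq (sumF2 S) (sumF2 T) := by
  induction h with
  | refl A => exact .refl _
  | symm _ ih => exact ih.symm
  | trans _ _ ih1 ih2 => exact ih1.trans ih2
  | fold A => exact .refl _
  | arrow h1 h2 _ _ => exact .arrow h1 h2
  | prod h1 h2 _ _ => exact .prod h1 h2
  | sum _ h2 _ _ => exact h2
  | list h _ => exact .prod h (.list h)

lemma tyEq_arrow {A B A' B' : Ty} (h : TyEq (.arrow A B) (.arrow A' B')) :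
    TyEq A A' ∧ TyEq B B' := ⟨h.domF_congr, h.codF_congr⟩

lemma tyEq_prod {A B A' B' : Ty} (h : TyEq (.prod A B) (.prod A' B')) :
    TyEq A A' ∧ TyEq B B' := ⟨h.prodF1_congr, h.prodF2_congr⟩

lemma tyEq_sum {A B A' B' : Ty} (h : TyEq (.sum A B) (.sum A' B')) :
    TyEq A A' ∧ TyEq B B' := ⟨h.sumF1_congr, h.sumF2_congr⟩


lemma inv_var : ∀ {Δ t B}, HasType Δ t B → ∀ n, t = .var n →
    ∃ A, Δ[n]? = some A ∧ TyEq A B := by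
  intro Δ t B h
  induction h <;> intro n e <;> cases e
  case var hget => exact ⟨_, hget, .refl _⟩
  case conv =>
    rename_i he _ ih
    obtain ⟨A, h1, h2⟩ := ih _ rfl
    exact ⟨A, h1, h2.trans he⟩

lemma inv_lam : ∀ {Δ t T}, HasType Δ t T → ∀ M, t = .lam M →
    ∃ A B, HasType (A :: Δ) M B ∧ TyEq (.arrow A B) T := by
  intro Δ t T h
  induction h <;> intro M e <;> cases e
  case lam h1 _ => exact ⟨_, _, h1, .refl _⟩
  case conv =>
    rename_i he _ ih
    obtain ⟨A, B, h1, h2⟩ := ih _ rfl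
    exact ⟨A, B, h1, h2.trans he⟩

lemma inv_app : ∀ {Δ t B}, HasType Δ t B → ∀ M N, t = .app M N →
    ∃ A, HasType Δ M (.arrow A B) ∧ HasType Δ N A := by
  intro Δ t B h
  induction h <;> intro M N e <;> cases e
  case app h1 h2 _ _ => exact ⟨_, h1, h2⟩
  case conv =>
    rename_i he _ ih
    obtain ⟨A, h1, h2⟩ := ih _ _ rfl
    exact ⟨A, .conv h1 (.arrow (.refl _) he), h2⟩

lemma inv_pair : ∀ {Δ t T}, HasType Δ t T → ∀ M N, t = .pair M N →
    ∃ A B, HasType Δ M A ∧ HasType Δ N B ∧ TyEq (.prod A B) T := by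
  intro Δ t T h
  induction h <;> intro M N e <;> cases e
  case pair h1 h2 _ _ => exact ⟨_, _, h1, h2, .refl _⟩
  case conv =>
    rename_i he _ ih
    obtain ⟨A, B, h1, h2, h3⟩ := ih _ _ rfl
    exact ⟨A, B, h1, h2, h3.trans he⟩

lemma inv_fst : ∀ {Δ t A}, HasType Δ t A → ∀ M, t = .fst M →
    ∃ B, HasType Δ M (.prod A B) := by
  intro Δ t A h
  induction h <;> intro M e <;> cases e
  case fst h1 _ => exact ⟨_, h1⟩
  case conv =>
    rename_i he _ ih
    obtain ⟨B, h1⟩ := ih _ rfl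
    exact ⟨B, .conv h1 (.prod he (.refl _))⟩

lemma inv_snd : ∀ {Δ t B}, HasType Δ t B → ∀ M, t = .snd M →
    ∃ A, HasType Δ M (.prod A B) := by
  intro Δ t B h
  induction h <;> intro M e <;> cases e
  case snd h1 _ => exact ⟨_, h1⟩
  case conv =>
    rename_i he _ ih
    obtain ⟨A, h1⟩ := ih _ rfl
    exact ⟨A, .conv h1 (.prod (.refl _) he)⟩

lemma inv_skip : ∀ {Δ t T}, HasType Δ t T → t = .skip → TyEq .unit T := by
  intro Δ t T h
  induction h <;> intro e <;> cases e
  case skip => exact .refl _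
  case conv => rename_i he _ ih; exact (ih rfl).trans he

lemma inv_letUnit : ∀ {Δ t B}, HasType Δ t B → ∀ M N, t = .letUnit M N →
    HasType Δ M .unit ∧ HasType Δ N B := by
  intro Δ t B h
  induction h <;> intro M N e <;> cases e
  case letUnit h1 h2 _ _ => exact ⟨h1, h2⟩
  case conv =>
    rename_i he _ ih
    obtain ⟨h1, h2⟩ := ih _ _ rfl
    exact ⟨h1, .conv h2 he⟩

lemma inv_tt : ∀ {Δ t T}, HasType Δ t T → t = .tt → TyEq .bit T := by
  intro Δ t T h
  induction h <;> intro e <;> cases e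
  case tt => exact .refl _
  case conv => rename_i he _ ih; exact (ih rfl).trans he

lemma inv_ff : ∀ {Δ t T}, HasType Δ t T → t = .ff → TyEq .bit T := by
  intro Δ t T h
  induction h <;> intro e <;> cases e
  case ff => exact .refl _
  case conv => rename_i he _ ih; exact (ih rfl).trans he

lemma inv_ite : ∀ {Δ t T}, HasType Δ t T → ∀ P M N, t = .ite P M N →
    ∃ C, HasType Δ P .bit ∧ HasType Δ M C ∧ HasType Δ N C ∧ FirstOrder C ∧
      TyEq C T := by
  intro Δ t T h
  induction h <;> intro P M N e <;> cases e
  case ite h1 h2 h3 h4 _ _ _ => exact ⟨_, h1, h2, h3, h4, .refl _⟩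
  case conv =>
    rename_i he _ ih
    obtain ⟨Cty, h1, h2, h3, h4, h5⟩ := ih _ _ _ rfl
    exact ⟨Cty, h1, h2, h3, h4, h5.trans he⟩

lemma inv_not : ∀ {Δ t T}, HasType Δ t T → t = .notOp →
    TyEq (.arrow .bit .bit) T := by
  intro Δ t T h
  induction h <;> intro e <;> cases e
  case notOp => exact .refl _
  case conv => rename_i he _ ih; exact (ih rfl).trans he

lemma inv_and : ∀ {Δ t T}, HasType Δ t T → t = .andOp →
    TyEq (.arrow (.prod .bit .bit) .bit) T := by
  intro Δ t T h
  induction h <;> intro e <;> cases e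
  case andOp => exact .refl _
  case conv => rename_i he _ ih; exact (ih rfl).trans he

lemma inv_xor : ∀ {Δ t T}, HasType Δ t T → t = .xorOp →
    TyEq (.arrow (.prod .bit .bit) .bit) T := by
  intro Δ t T h
  induction h <;> intro e <;> cases e
  case xorOp => exact .refl _
  case conv => rename_i he _ ih; exact (ih rfl).trans he

lemma inv_inl : ∀ {Δ t T}, HasType Δ t T → ∀ M, t = .inl M →
    ∃ A B, HasType Δ M A ∧ TyEq (.sum A B) T := by
  intro Δ t T h
  induction h <;> intro M e <;> cases e
  case inl h1 _ => exact ⟨_, _, h1, .refl _⟩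
  case conv =>
    rename_i he _ ih
    obtain ⟨A, B, h1, h2⟩ := ih _ rfl
    exact ⟨A, B, h1, h2.trans he⟩

lemma inv_inr : ∀ {Δ t T}, HasType Δ t T → ∀ M, t = .inr M →
    ∃ A B, HasType Δ M B ∧ TyEq (.sum A B) T := by
  intro Δ t T h
  induction h <;> intro M e <;> cases e
  case inr h1 _ => exact ⟨_, _, h1, .refl _⟩
  case conv =>
    rename_i he _ ih
    obtain ⟨A, B, h1, h2⟩ := ih _ rfl
    exact ⟨A, B, h1, h2.trans he⟩

lemma inv_match : ∀ {Δ t T}, HasType Δ t T → ∀ P M N, t = .matchSum P M N →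
    ∃ A B, HasType Δ P (.sum A B) ∧ HasType (A :: Δ) M T ∧
      HasType (B :: Δ) N T := by
  intro Δ t T h
  induction h <;> intro P M N e <;> cases e
  case matchSum h1 h2 h3 _ _ _ => exact ⟨_, _, h1, h2, h3⟩
  case conv =>
    rename_i he _ ih
    obtain ⟨A, B, h1, h2, h3⟩ := ih _ _ _ rfl
    exact ⟨A, B, h1, .conv h2 he, .conv h3 he⟩

lemma inv_split : ∀ {Δ t T}, HasType Δ t T → t = .split →
    ∃ A, TyEq (.arrow (.list A) (.sum .unit (.prod A (.list A)))) T := by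
  intro Δ t T h
  induction h <;> intro e <;> cases e
  case split => exact ⟨_, .refl _⟩
  case conv =>
    rename_i he _ ih
    obtain ⟨A, h1⟩ := ih rfl
    exact ⟨A, h1.trans he⟩

lemma inv_fix : ∀ {Δ t A}, HasType Δ t A → ∀ M, t = .fix M →
    HasType Δ M (.arrow A A) := by
  intro Δ t A h
  induction h <;> intro M e <;> cases e
  case fix h1 _ => exact h1
  case conv => rename_i he _ ih; exact .conv (ih _ rfl) (.arrow he he)

lemma weaken_typing : ∀ {Δ M A}, HasType Δ M A → ∀ Δ', HasType (Δ ++ Δ') M A := by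
  intro Δ M A h
  induction h with
  | var hget =>
      intro Δ'
      obtain ⟨hlt, -⟩ := List.getElem?_eq_some_iff.mp hget
      exact .var (by rw [List.getElem?_append_left hlt]; exact hget)
  | lam _ ih => exact fun Δ' => .lam (ih Δ')
  | app _ _ ih1 ih2 => exact fun Δ' => .app (ih1 Δ') (ih2 Δ')
  | pair _ _ ih1 ih2 => exact fun Δ' => .pair (ih1 Δ') (ih2 Δ')
  | fst _ ih => exact fun Δ' => .fst (ih Δ')
  | snd _ ih => exact fun Δ' => .snd (ih Δ')
  | skip => exact fun Δ' => .skip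
  | letUnit _ _ ih1 ih2 => exact fun Δ' => .letUnit (ih1 Δ') (ih2 Δ')
  | tt => exact fun Δ' => .tt
  | ff => exact fun Δ' => .ff
  | ite _ _ _ hfo ih1 ih2 ih3 =>
      exact fun Δ' => .ite (ih1 Δ') (ih2 Δ') (ih3 Δ') hfo
  | notOp => exact fun Δ' => .notOp
  | andOp => exact fun Δ' => .andOp
  | xorOp => exact fun Δ' => .xorOp
  | inl _ ih => exact fun Δ' => .inl (ih Δ')
  | inr _ ih => exact fun Δ' => .inr (ih Δ')
  | matchSum _ _ _ ih1 ih2 ih3 =>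
      exact fun Δ' => .matchSum (ih1 Δ') (ih2 Δ') (ih3 Δ')
  | split => exact fun Δ' => .split
  | fix _ ih => exact fun Δ' => .fix (ih Δ')
  | err => exact fun Δ' => .err
  | conv _ he ih => exact fun Δ' => .conv (ih Δ') he

lemma lift_typing {Ξ : List Ty} :
    ∀ {Δ M A}, HasType Δ M A → ∀ Γ₁ Γ₂, Δ = Γ₁ ++ Γ₂ →
    HasType (Γ₁ ++ Ξ ++ Γ₂) (liftTm Ξ.length Γ₁.length M) A := by
  intro Δ M A h
  induction h with
  | var hget =>
      rename_i n A
      intro Γ₁ Γ₂ e; subst e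
      by_cases hn : n < Γ₁.length
      · simp only [liftTm, if_pos hn]
        refine .var ?_
        rw [List.getElem?_append_left hn] at hget
        rw [List.append_assoc, List.getElem?_append_left hn]
        exact hget
      · simp only [liftTm, if_neg hn]
        push_neg at hn
        refine .var ?_
        rw [List.getElem?_append_right hn] at hget
        rw [List.append_assoc, List.getElem?_append_right (by omega),
          List.getElem?_append_right (by omega)]
        have : n + Ξ.length - Γ₁.length - Ξ.length = n - Γ₁.length := by omega
        rw [this]
        exact hget
  | lam _ ih =>
      intro Γ₁ Γ₂ e; subst e
      simp only [liftTm]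
      exact .lam (ih (_ :: Γ₁) Γ₂ rfl)
  | app _ _ ih1 ih2 =>
      intro Γ₁ Γ₂ e; subst e
      exact .app (ih1 Γ₁ Γ₂ rfl) (ih2 Γ₁ Γ₂ rfl)
  | pair _ _ ih1 ih2 =>
      intro Γ₁ Γ₂ e; subst e
      exact .pair (ih1 Γ₁ Γ₂ rfl) (ih2 Γ₁ Γ₂ rfl)
  | fst _ ih => intro Γ₁ Γ₂ e; subst e; exact .fst (ih Γ₁ Γ₂ rfl)
  | snd _ ih => intro Γ₁ Γ₂ e; subst e; exact .snd (ih Γ₁ Γ₂ rfl)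
  | skip => intro Γ₁ Γ₂ e; exact .skip
  | letUnit _ _ ih1 ih2 =>
      intro Γ₁ Γ₂ e; subst e
      exact .letUnit (ih1 Γ₁ Γ₂ rfl) (ih2 Γ₁ Γ₂ rfl)
  | tt => intro Γ₁ Γ₂ e; exact .tt
  | ff => intro Γ₁ Γ₂ e; exact .ff
  | ite _ _ _ hfo ih1 ih2 ih3 =>
      intro Γ₁ Γ₂ e; subst e
      exact .ite (ih1 Γ₁ Γ₂ rfl) (ih2 Γ₁ Γ₂ rfl) (ih3 Γ₁ Γ₂ rfl) hfo
  | notOp => intro Γ₁ Γ₂ e; exact .notOp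
  | andOp => intro Γ₁ Γ₂ e; exact .andOp
  | xorOp => intro Γ₁ Γ₂ e; exact .xorOp
  | inl _ ih => intro Γ₁ Γ₂ e; subst e; exact .inl (ih Γ₁ Γ₂ rfl)
  | inr _ ih => intro Γ₁ Γ₂ e; subst e; exact .inr (ih Γ₁ Γ₂ rfl)
  | matchSum _ _ _ ih1 ih2 ih3 =>
      intro Γ₁ Γ₂ e; subst e
      simp only [liftTm]
      exact .matchSum (ih1 Γ₁ Γ₂ rfl) (ih2 (_ :: Γ₁) Γ₂ rfl) (ih3 (_ :: Γ₁) Γ₂ rfl)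
  | split => intro Γ₁ Γ₂ e; exact .split
  | fix _ ih => intro Γ₁ Γ₂ e; subst e; exact .fix (ih Γ₁ Γ₂ rfl)
  | err => intro Γ₁ Γ₂ e; exact .err
  | conv _ he ih => intro Γ₁ Γ₂ e; exact .conv (ih Γ₁ Γ₂ e) he

lemma subst_typing {N : Tm} {A : Ty} :
    ∀ {Δ M B}, HasType Δ M B → ∀ Γ₁ Γ₂, Δ = Γ₁ ++ A :: Γ₂ →
    HasType Γ₂ N A → HasType (Γ₁ ++ Γ₂) (subst N Γ₁.length M) B := by
  intro Δ M B h
  induction h with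
  | var hget =>
      rename_i n B
      intro Γ₁ Γ₂ e hN; subst e
      rcases lt_trichotomy n Γ₁.length with hn | hn | hn
      · simp only [subst, if_neg (by omega : ¬ n = Γ₁.length),
          if_neg (by omega : ¬ Γ₁.length < n)]
        refine .var ?_
        rw [List.getElem?_append_left hn] at hget
        rw [List.getElem?_append_left hn]
        exact hget
      · subst hn
        simp only [subst, if_pos rfl]
        have hB : B = A := by
          rw [List.getElem?_append_right (le_refl _)] at hget
          simp at hget
          exact hget.symm
        subst hB
        have := lift_typing (Ξ := Γ₁) hN [] Γ₂ rfl
        simpa using this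
      · simp only [subst, if_neg (by omega : ¬ n = Γ₁.length), if_pos hn]
        refine .var ?_
        rw [List.getElem?_append_right (by omega)] at hget
        rw [List.getElem?_append_right (by omega : Γ₁.length ≤ n - 1)]
        have h1 : n - Γ₁.length = (n - 1 - Γ₁.length) + 1 := by omega
        rw [h1] at hget
        simpa using hget
  | lam _ ih =>
      intro Γ₁ Γ₂ e hN; subst e
      simp only [subst]
      exact .lam (ih (_ :: Γ₁) Γ₂ rfl hN)
  | app _ _ ih1 ih2 =>
      intro Γ₁ Γ₂ e hN; subst e
      exact .app (ih1 Γ₁ Γ₂ rfl hN) (ih2 Γ₁ Γ₂ rfl hN)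
  | pair _ _ ih1 ih2 =>
      intro Γ₁ Γ₂ e hN; subst e
      exact .pair (ih1 Γ₁ Γ₂ rfl hN) (ih2 Γ₁ Γ₂ rfl hN)
  | fst _ ih => intro Γ₁ Γ₂ e hN; subst e; exact .fst (ih Γ₁ Γ₂ rfl hN)
  | snd _ ih => intro Γ₁ Γ₂ e hN; subst e; exact .snd (ih Γ₁ Γ₂ rfl hN)
  | skip => intro Γ₁ Γ₂ e hN; exact .skip
  | letUnit _ _ ih1 ih2 =>
      intro Γ₁ Γ₂ e hN; subst e
      exact .letUnit (ih1 Γ₁ Γ₂ rfl hN) (ih2 Γ₁ Γ₂ rfl hN)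
  | tt => intro Γ₁ Γ₂ e hN; exact .tt
  | ff => intro Γ₁ Γ₂ e hN; exact .ff
  | ite _ _ _ hfo ih1 ih2 ih3 =>
      intro Γ₁ Γ₂ e hN; subst e
      exact .ite (ih1 Γ₁ Γ₂ rfl hN) (ih2 Γ₁ Γ₂ rfl hN) (ih3 Γ₁ Γ₂ rfl hN) hfo
  | notOp => intro Γ₁ Γ₂ e hN; exact .notOp
  | andOp => intro Γ₁ Γ₂ e hN; exact .andOp
  | xorOp => intro Γ₁ Γ₂ e hN; exact .xorOp
  | inl _ ih => intro Γ₁ Γ₂ e hN; subst e; exact .inl (ih Γ₁ Γ₂ rfl hN)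
  | inr _ ih => intro Γ₁ Γ₂ e hN; subst e; exact .inr (ih Γ₁ Γ₂ rfl hN)
  | matchSum _ _ _ ih1 ih2 ih3 =>
      intro Γ₁ Γ₂ e hN; subst e
      simp only [subst]
      exact .matchSum (ih1 Γ₁ Γ₂ rfl hN) (ih2 (_ :: Γ₁) Γ₂ rfl hN)
        (ih3 (_ :: Γ₁) Γ₂ rfl hN)
  | split => intro Γ₁ Γ₂ e hN; exact .split
  | fix _ ih => intro Γ₁ Γ₂ e hN; subst e; exact .fix (ih Γ₁ Γ₂ rfl hN)
  | err => intro Γ₁ Γ₂ e hN; exact .err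
  | conv _ he ih => intro Γ₁ Γ₂ e hN; exact .conv (ih Γ₁ Γ₂ e hN) he

lemma subst_typing0 {Δ : List Ty} {M N : Tm} {A B : Ty}
    (hM : HasType (A :: Δ) M B) (hN : HasType Δ N A) :
    HasType Δ (subst N 0 M) B :=
  subst_typing hM [] Δ rfl hN

lemma amStep_extend {I : Finset ℕ} {d M C L N C' L'}
    (hs : AMStep I d M C L N C' L') : ∃ ex, L' = L ++ ex := by
  induction hs <;> first | assumption | exact ⟨_, rfl⟩ | exact ⟨[], by simp⟩

lemma ctx_extend {Γ : List Ty} {L ex : List ℕ} {T : Tm} {A : Ty}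
    (h : HasType (Γ ++ List.replicate L.length Ty.bit) T A) :
    HasType (Γ ++ List.replicate (L ++ ex).length Ty.bit) T A := by
  have h2 := weaken_typing h (List.replicate ex.length Ty.bit)
  rw [List.length_append, List.replicate_add, ← List.append_assoc]
  exact h2

lemma iteAux_count {d : ℕ} {L : List ℕ} :
    ∀ {n V W U n' ps}, IteAux d L n V W U n' ps → n' = n + ps.length := by
  intro n V W U n' ps h
  induction h with
  | var _ _ => simp
  | pair _ _ ih1 ih2 => rw [ih2, ih1, List.length_append]; omega
  | nil => simp
  | cons _ _ ih1 ih2 => rw [ih2, ih1, List.length_append]; omega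

lemma iteAux_typing {d : ℕ} {L : List ℕ} {Γ : List Ty} (hd : Γ.length = d)
    {K : ℕ} :
    ∀ {n V W U n' ps}, IteAux d L n V W U n' ps → n' ≤ K →
    ∀ {Cty}, HasType (Γ ++ List.replicate L.length Ty.bit) V Cty →
    HasType (Γ ++ List.replicate K Ty.bit) U Cty := by
  intro n V W U n' ps h
  induction h with
  | var hj hk =>
      rename_i n j k
      intro hn Cty hV
      obtain ⟨A, hget, he⟩ := inv_var hV _ rfl
      have hA : A = Ty.bit := by
        rw [List.getElem?_append_right (by omega),
          (show d + j - Γ.length = j by omega)] at hget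
        rw [List.getElem?_replicate, if_pos hj] at hget
        exact (Option.some.inj hget).symm
      refine .conv (.var ?_) (hA ▸ he)
      rw [List.getElem?_append_right (by omega),
        (show d + n - Γ.length = n by omega)]
      rw [List.getElem?_replicate, if_pos (by omega)]
  | pair h1 h2 ih1 ih2 =>
      intro hn Cty hV
      obtain ⟨A, B, hv1, hv2, he⟩ := inv_pair hV _ _ rfl
      have hc := iteAux_count h2
      exact .conv (.pair (ih1 (by omega) hv1) (ih2 hn hv2)) he
  | nil =>
      intro hn Cty hV
      obtain ⟨A, B, hsk, he⟩ := inv_inl hV _ rfl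
      exact .conv (.inl (.conv .skip (inv_skip hsk rfl))) he
  | cons h1 h2 ih1 ih2 =>
      intro hn Cty hV
      obtain ⟨A, B, hp, he⟩ := inv_inr hV _ rfl
      obtain ⟨A₁, B₁, hv1, hv2, hep⟩ := inv_pair hp _ _ rfl
      have hc := iteAux_count h2
      exact .conv (.inr (.conv (.pair (ih1 (by omega) hv1) (ih2 hn hv2)) hep)) he

lemma am_pres_gen {I : Finset ℕ} :
    ∀ {d M C L N C' L'}, AMStep I d M C L N C' L' →
    ∀ Γ A, Γ.length = d →
    HasType (Γ ++ List.replicate L.length Ty.bit) M A →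
    HasType (Γ ++ List.replicate L'.length Ty.bit) N A := by
  intro d M C L N C' L' hs
  induction hs with
  | beta d M N C L =>
      intro Γ A _ ht
      obtain ⟨A₁, hf, ha⟩ := inv_app ht _ _ rfl
      obtain ⟨A₂, B₂, hM, he⟩ := inv_lam hf _ rfl
      obtain ⟨he1, he2⟩ := tyEq_arrow he
      exact .conv (subst_typing0 hM (.conv ha he1.symm)) he2
  | fstPair d M N C L =>
      intro Γ A _ ht
      obtain ⟨B, hp⟩ := inv_fst ht _ rfl
      obtain ⟨A', B', h1, h2, he⟩ := inv_pair hp _ _ rfl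
      exact .conv h1 (tyEq_prod he).1
  | sndPair d M N C L =>
      intro Γ A _ ht
      obtain ⟨B, hp⟩ := inv_snd ht _ rfl
      obtain ⟨A', B', h1, h2, he⟩ := inv_pair hp _ _ rfl
      exact .conv h2 (tyEq_prod he).2
  | letU d M C L =>
      intro Γ A _ ht
      exact (inv_letUnit ht _ _ rfl).2
  | splitRed d M C L =>
      intro Γ A _ ht
      obtain ⟨A₁, hsp, hM⟩ := inv_app ht _ _ rfl
      obtain ⟨X, he⟩ := inv_split hsp rfl
      obtain ⟨he1, he2⟩ := tyEq_arrow he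
      exact .conv hM (he1.symm.trans ((TyEq.fold X).symm.trans he2))
  | matchInl d P M N C L =>
      intro Γ A _ ht
      obtain ⟨X, Y, hP, hM, hN⟩ := inv_match ht _ _ _ rfl
      obtain ⟨X', Y', hP', he⟩ := inv_inl hP _ rfl
      exact subst_typing0 hM (.conv hP' (tyEq_sum he).1)
  | matchInr d P M N C L =>
      intro Γ A _ ht
      obtain ⟨X, Y, hP, hM, hN⟩ := inv_match ht _ _ _ rfl
      obtain ⟨X', Y', hP', he⟩ := inv_inr hP _ rfl
      exact subst_typing0 hN (.conv hP' (tyEq_sum he).2)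
  | fixRed d M C L =>
      intro Γ A _ ht
      exact .app (inv_fix ht _ rfl) (.fix (inv_fix ht _ rfl))
  | ffRed d C L w hw =>
      intro Γ A hd ht; subst hd
      refine .conv (.var ?_) (inv_ff ht rfl)
      rw [List.getElem?_append_right (by omega),
        (show Γ.length + L.length - Γ.length = L.length by omega)]
      rw [List.getElem?_replicate, if_pos (by simp)]
  | ttRed d C L w hw =>
      intro Γ A hd ht; subst hd
      refine .conv (.var ?_) (inv_tt ht rfl)
      rw [List.getElem?_append_right (by omega),
        (show Γ.length + L.length - Γ.length = L.length by omega)]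
      rw [List.getElem?_replicate, if_pos (by simp)]
  | notRed d C L j w hj hw =>
      intro Γ A hd ht; subst hd
      obtain ⟨A₁, hop, harg⟩ := inv_app ht _ _ rfl
      refine .conv (.var ?_) (tyEq_arrow (inv_not hop rfl)).2
      rw [List.getElem?_append_right (by omega),
        (show Γ.length + L.length - Γ.length = L.length by omega)]
      rw [List.getElem?_replicate, if_pos (by simp)]
  | andRed d C L j k w hj hk hw =>
      intro Γ A hd ht; subst hd
      obtain ⟨A₁, hop, harg⟩ := inv_app ht _ _ rfl
      refine .conv (.var ?_) (tyEq_arrow (inv_and hop rfl)).2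
      rw [List.getElem?_append_right (by omega),
        (show Γ.length + L.length - Γ.length = L.length by omega)]
      rw [List.getElem?_replicate, if_pos (by simp)]
  | xorRed d C L j k w hj hk hw =>
      intro Γ A hd ht; subst hd
      obtain ⟨A₁, hop, harg⟩ := inv_app ht _ _ rfl
      refine .conv (.var ?_) (tyEq_arrow (inv_xor hop rfl)).2
      rw [List.getElem?_append_right (by omega),
        (show Γ.length + L.length - Γ.length = L.length by omega)]
      rw [List.getElem?_replicate, if_pos (by simp)]
  | iteRed d C L j V W U n ps ws hj ha hlen hnd hfr =>
      intro Γ A hd ht; subst hd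
      obtain ⟨Cty, hP, hV, hW, hfo, he⟩ := inv_ite ht _ _ _ rfl
      have hc := iteAux_count ha
      refine .conv (iteAux_typing rfl ha ?_ hV) he
      simp only [List.length_append]
      omega
  | iteErr d C L j V W hj hV hW hns =>
      intro Γ A _ ht
      exact .err
  | lamC h ih =>
      intro Γ A hd ht
      obtain ⟨A₂, B₂, hM, he⟩ := inv_lam ht _ rfl
      exact .conv (.lam (ih (A₂ :: Γ) B₂ (by simp [hd]) hM)) he
  | appL N h ih =>
      intro Γ A hd ht
      obtain ⟨A₁, h1, h2⟩ := inv_app ht _ _ rfl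
      obtain ⟨ex, rfl⟩ := amStep_extend h
      exact .app (ih Γ _ hd h1) (ctx_extend h2)
  | appR M h ih =>
      intro Γ A hd ht
      obtain ⟨A₁, h1, h2⟩ := inv_app ht _ _ rfl
      obtain ⟨ex, rfl⟩ := amStep_extend h
      exact .app (ctx_extend h1) (ih Γ _ hd h2)
  | pairL N h ih =>
      intro Γ A hd ht
      obtain ⟨A', B', h1, h2, he⟩ := inv_pair ht _ _ rfl
      obtain ⟨ex, rfl⟩ := amStep_extend h
      exact .conv (.pair (ih Γ _ hd h1) (ctx_extend h2)) he
  | pairR M h ih =>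
      intro Γ A hd ht
      obtain ⟨A', B', h1, h2, he⟩ := inv_pair ht _ _ rfl
      obtain ⟨ex, rfl⟩ := amStep_extend h
      exact .conv (.pair (ctx_extend h1) (ih Γ _ hd h2)) he
  | fstC h ih =>
      intro Γ A hd ht
      obtain ⟨B, h1⟩ := inv_fst ht _ rfl
      exact .fst (ih Γ _ hd h1)
  | sndC h ih =>
      intro Γ A hd ht
      obtain ⟨B, h1⟩ := inv_snd ht _ rfl
      exact .snd (ih Γ _ hd h1)
  | letL N h ih =>
      intro Γ A hd ht
      obtain ⟨h1, h2⟩ := inv_letUnit ht _ _ rfl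
      obtain ⟨ex, rfl⟩ := amStep_extend h
      exact .letUnit (ih Γ _ hd h1) (ctx_extend h2)
  | letR M h ih =>
      intro Γ A hd ht
      obtain ⟨h1, h2⟩ := inv_letUnit ht _ _ rfl
      obtain ⟨ex, rfl⟩ := amStep_extend h
      exact .letUnit (ctx_extend h1) (ih Γ _ hd h2)
  | ite1 M N h ih =>
      intro Γ A hd ht
      obtain ⟨Cty, hP, hM, hN, hfo, he⟩ := inv_ite ht _ _ _ rfl
      obtain ⟨ex, rfl⟩ := amStep_extend h
      exact .conv (.ite (ih Γ _ hd hP) (ctx_extend hM) (ctx_extend hN) hfo) he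
  | ite2 P N h ih =>
      intro Γ A hd ht
      obtain ⟨Cty, hP, hM, hN, hfo, he⟩ := inv_ite ht _ _ _ rfl
      obtain ⟨ex, rfl⟩ := amStep_extend h
      exact .conv (.ite (ctx_extend hP) (ih Γ _ hd hM) (ctx_extend hN) hfo) he
  | ite3 P M h ih =>
      intro Γ A hd ht
      obtain ⟨Cty, hP, hM, hN, hfo, he⟩ := inv_ite ht _ _ _ rfl
      obtain ⟨ex, rfl⟩ := amStep_extend h
      exact .conv (.ite (ctx_extend hP) (ctx_extend hM) (ih Γ _ hd hN) hfo) he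
  | inlC h ih =>
      intro Γ A hd ht
      obtain ⟨A', B', h1, he⟩ := inv_inl ht _ rfl
      exact .conv (.inl (ih Γ _ hd h1)) he
  | inrC h ih =>
      intro Γ A hd ht
      obtain ⟨A', B', h1, he⟩ := inv_inr ht _ rfl
      exact .conv (.inr (ih Γ _ hd h1)) he
  | match1 M N h ih =>
      intro Γ A hd ht
      obtain ⟨X, Y, hP, hM, hN⟩ := inv_match ht _ _ _ rfl
      obtain ⟨ex, rfl⟩ := amStep_extend h
      exact .matchSum (ih Γ _ hd hP) (ctx_extend (Γ := X :: Γ) hM)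
        (ctx_extend (Γ := Y :: Γ) hN)
  | match2 P N h ih =>
      intro Γ A hd ht
      obtain ⟨X, Y, hP, hM, hN⟩ := inv_match ht _ _ _ rfl
      obtain ⟨ex, rfl⟩ := amStep_extend h
      exact .matchSum (ctx_extend hP) (ih (X :: Γ) _ (by simp [hd]) hM)
        (ctx_extend (Γ := Y :: Γ) hN)
  | match3 P M h ih =>
      intro Γ A hd ht
      obtain ⟨X, Y, hP, hM, hN⟩ := inv_match ht _ _ _ rfl
      obtain ⟨ex, rfl⟩ := amStep_extend h
      exact .matchSum (ctx_extend hP) (ctx_extend (Γ := X :: Γ) hM)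
        (ih (Y :: Γ) _ (by simp [hd]) hN)
  | fixC h ih =>
      intro Γ A hd ht
      exact .fix (ih Γ _ hd (inv_fix ht _ rfl))

end AuxPreservation
/-- type preservation for the circuit-generating abstract
machine.  If `p₁:bit, …, p_{#L}:bit ⊢ M : bit^m` and the machine
`(M, RC, L)` steps to `(N, RC', L')`, then
`p₁:bit, …, p_{#L'}:bit ⊢ N : bit^m`. -/
theorem am_preservation (I : Finset ℕ) (M N : Tm) (C C' : List Gate)
    (L L' : List ℕ) (m : ℕ) (hL : L.Nodup)
    (ht : HasType (List.replicate L.length Ty.bit) M (bitPow m))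
    (hs : AMStep I 0 M C L N C' L') :
    HasType (List.replicate L'.length Ty.bit) N (bitPow m) := by
  have h := am_pres_gen hs [] (bitPow m) rfl (by simpa using ht)
  simpa using h
end

section
/- Bennett embedding correctness: given a Landauer embedding T_f of f : bit^n → bit^m (a reversible circuit sending (x, 0⃗) to (x, trace, f(x))), the circuit consisting of T_f, followed by m CNOT gates copying (via XOR) the output wires of T_f onto m extra wires initially holding y, followed by the inverse circuit T_f⁻¹ (the reversed gate list), maps (x, 0⃗, y) to (x, 0⃗, y XOR f(x)), restoring all auxiliary wires to false. -/
set_option autoImplicit true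
set_option maxHeartbeats 1000000

/-- The copying stage: for each `k`, the gate CNOT(tgt k; (out k, true)),
XOR-ing each output wire onto the corresponding target wire. -/
def copyGates {m : ℕ} (outW tgt : Fin m → ℕ) : List Gate :=
  (List.finRange m).map fun k => ⟨tgt k, [(outW k, true)]⟩

lemma execGate_ne (g : Gate) (v : ℕ → Bool) (w : ℕ) (h : w ≠ g.active) :
    execGate g v w = v w := by simp [execGate, h]

lemma list_all_congr {α} (l : List α) (p q : α → Bool) (h : ∀ a ∈ l, p a = q a) :
    l.all p = l.all q := by induction l <;> simp_all

lemma execGate_involutive (g : Gate) (hg : g.wf) (v : ℕ → Bool) :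
    execGate g (execGate g v) = v := by
  funext w
  by_cases h : w = g.active
  · subst h
    have hall : g.controls.all (ctrlVal (execGate g v)) = g.controls.all (ctrlVal v) := by
      apply list_all_congr
      intro c hc
      unfold ctrlVal
      rw [execGate_ne _ _ _ (hg c hc)]
    by_cases he : g.controls.isEmpty
    · simp [execGate, he]
    · simp only [execGate, if_pos rfl, if_neg he, hall]
      cases v g.active <;> cases g.controls.all (ctrlVal v) <;> rfl
  · rw [execGate_ne _ _ _ h, execGate_ne _ _ _ h]

lemma execCircuit_cons (g : Gate) (C : List Gate) (v : ℕ → Bool) :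
    execCircuit (g :: C) v = execCircuit C (execGate g v) := rfl

lemma execCircuit_append (A B : List Gate) (v : ℕ → Bool) :
    execCircuit (A ++ B) v = execCircuit B (execCircuit A v) := by
  simp [execCircuit, List.foldl_append]

lemma execCircuit_reverse (C : List Gate) (hwf : ∀ g ∈ C, g.wf) (v : ℕ → Bool) :
    execCircuit C.reverse (execCircuit C v) = v := by
  induction C generalizing v with
  | nil => rfl
  | cons g C ih =>
    rw [List.reverse_cons, execCircuit_cons, execCircuit_append,
      ih (fun g hg => hwf g (List.mem_cons_of_mem _ hg)) (execGate g v)]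
    show execGate g (execGate g v) = v
    exact execGate_involutive g (hwf g (List.mem_cons_self)) v

lemma execCircuit_ne_active (C : List Gate) (w : ℕ) (h : ∀ g ∈ C, w ≠ g.active)
    (v : ℕ → Bool) : execCircuit C v w = v w := by
  induction C generalizing v with
  | nil => rfl
  | cons g C ih =>
    rw [execCircuit_cons, ih (fun g hg => h g (List.mem_cons_of_mem _ hg)),
      execGate_ne _ _ _ (h g (List.mem_cons_self))]

lemma execCircuit_not_mem_wires (C : List Gate) (w : ℕ) (h : w ∉ circuitWires C)
    (v : ℕ → Bool) : execCircuit C v w = v w := by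
  apply execCircuit_ne_active
  intro g hg hw
  exact h ⟨g, hg, hw ▸ Set.mem_insert _ _⟩

lemma execCircuit_congr (C : List Gate) (S : Set ℕ) (hS : circuitWires C ⊆ S)
    (v₁ v₂ : ℕ → Bool) (h : ∀ w ∈ S, v₁ w = v₂ w) :
    ∀ w ∈ S, execCircuit C v₁ w = execCircuit C v₂ w := by
  induction C generalizing v₁ v₂ with
  | nil => exact h
  | cons g C ih =>
    rw [execCircuit_cons, execCircuit_cons]
    apply ih
    · intro w hw
      obtain ⟨g', hg', hw'⟩ := hw
      exact hS ⟨g', List.mem_cons_of_mem _ hg', hw'⟩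
    · intro w hw
      have hgw : g.wires ⊆ S := fun u hu => hS ⟨g, List.mem_cons_self, hu⟩
      by_cases hwa : w = g.active
      · subst hwa
        have hall : g.controls.all (ctrlVal v₁) = g.controls.all (ctrlVal v₂) := by
          apply list_all_congr
          intro c hc
          unfold ctrlVal
          rw [h c.1 (hgw (Set.mem_insert_iff.mpr (Or.inr ⟨c.2, hc⟩)))]
        simp only [execGate, if_pos rfl, hall, h _ (hgw (Set.mem_insert _ _))]
      · rw [execGate_ne _ _ _ hwa, execGate_ne _ _ _ hwa]
        exact h w hw

lemma circuitWires_reverse (C : List Gate) : circuitWires C.reverse = circuitWires C := by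
  ext w; simp [circuitWires]

lemma copy_not_target {m : ℕ} (outW tgt : Fin m → ℕ) (w : ℕ) (h : ∀ k, w ≠ tgt k)
    (v : ℕ → Bool) : execCircuit (copyGates outW tgt) v w = v w := by
  apply execCircuit_ne_active
  intro g hg
  simp only [copyGates, List.mem_map] at hg
  obtain ⟨k, _, rfl⟩ := hg
  exact h k

lemma copy_target_aux {m : ℕ} (outW tgt : Fin m → ℕ)
    (hinj : Function.Injective tgt) (hto : ∀ k j, tgt k ≠ outW j)
    (L : List (Fin m)) (hL : L.Nodup) (k : Fin m) (hk : k ∈ L) (v : ℕ → Bool) :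
    execCircuit (L.map fun k => (⟨tgt k, [(outW k, true)]⟩ : Gate)) v (tgt k)
      = Bool.xor (v (tgt k)) (v (outW k)) := by
  induction L generalizing v with
  | nil => cases hk
  | cons a L ih =>
    rw [List.map_cons, execCircuit_cons]
    obtain ⟨ha, hL'⟩ := List.nodup_cons.mp hL
    rcases List.mem_cons.mp hk with rfl | hk'
    · have hrest : execCircuit (L.map fun k => (⟨tgt k, [(outW k, true)]⟩ : Gate))
          (execGate ⟨tgt k, [(outW k, true)]⟩ v) (tgt k)
          = execGate ⟨tgt k, [(outW k, true)]⟩ v (tgt k) := by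
        apply execCircuit_ne_active
        intro g hg
        simp only [List.mem_map] at hg
        obtain ⟨j, hj, rfl⟩ := hg
        exact fun h => ha (hinj h ▸ hj)
      rw [hrest]
      simp [execGate, ctrlVal]
    · have hne : tgt k ≠ tgt a := fun h => ha (hinj h ▸ hk')
      rw [ih hL' hk',
        execGate_ne (⟨tgt a, [(outW a, true)]⟩ : Gate) v (tgt k) hne,
        execGate_ne (⟨tgt a, [(outW a, true)]⟩ : Gate) v (outW k) (Ne.symm (hto a k))]

lemma copy_target {m : ℕ} (outW tgt : Fin m → ℕ)
    (hinj : Function.Injective tgt) (hto : ∀ k j, tgt k ≠ outW j)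
    (k : Fin m) (v : ℕ → Bool) :
    execCircuit (copyGates outW tgt) v (tgt k) = Bool.xor (v (tgt k)) (v (outW k)) :=
  copy_target_aux outW tgt hinj hto _ (List.nodup_finRange m) k (List.mem_finRange k) v

/-- Bennett embedding correctness.  Let `T` be a Landauer
embedding of `f` : started on `(x, 0⃗)` it keeps `x` on the input wires and
puts `f x` on the output wires.  Let `tgt` be `m` extra wires, pairwise
distinct and disjoint from all wires of `T`, from its input wires and from
its output wires.  Then the circuit `T ; copy ; T⁻¹` (with `T⁻¹` the reversed
gate list) maps `(x, 0⃗, y)` to `(x, 0⃗, y XOR f x)`: inputs are unchanged,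
targets hold `y XOR f x`, and all auxiliary wires of `T` are back to false. -/
theorem bennett_embedding {n m : ℕ} (T : List Gate)
    (inW : Fin n → ℕ) (outW tgt : Fin m → ℕ)
    (f : (Fin n → Bool) → Fin m → Bool)
    (hT : ∀ (x : Fin n → Bool) (v : ℕ → Bool),
      (∀ i, v (inW i) = x i) →
      (∀ w ∈ circuitWires T, w ∉ Set.range inW → v w = false) →
      (∀ i, execCircuit T v (inW i) = x i) ∧
      (∀ j, execCircuit T v (outW j) = f x j))
    (hwf : ∀ g ∈ T, g.wf)
    (htgt_inj : Function.Injective tgt)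
    (htgt_wires : ∀ k, tgt k ∉ circuitWires T)
    (htgt_in : ∀ k, tgt k ∉ Set.range inW)
    (htgt_out : ∀ k j, tgt k ≠ outW j)
    (x : Fin n → Bool) (y : Fin m → Bool) (v : ℕ → Bool)
    (hvin : ∀ i, v (inW i) = x i)
    (hvtgt : ∀ k, v (tgt k) = y k)
    (hvaux : ∀ w ∈ circuitWires T, w ∉ Set.range inW → v w = false) :
    (∀ i, execCircuit (T ++ copyGates outW tgt ++ T.reverse) v (inW i) = x i) ∧
    (∀ k, execCircuit (T ++ copyGates outW tgt ++ T.reverse) v (tgt k)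
            = Bool.xor (y k) (f x k)) ∧
    (∀ w ∈ circuitWires T, w ∉ Set.range inW →
       execCircuit (T ++ copyGates outW tgt ++ T.reverse) v w = false) := by
  obtain ⟨hin1, hout1⟩ := hT x v hvin hvaux
  set v₁ := execCircuit T v with hv₁
  set v₂ := execCircuit (copyGates outW tgt) v₁ with hv₂
  have hsplit : ∀ w, execCircuit (T ++ copyGates outW tgt ++ T.reverse) v w
      = execCircuit T.reverse v₂ w := by
    intro w
    rw [execCircuit_append, execCircuit_append]
  -- v₂ agrees with v₁ on circuitWires T
  have hagree : ∀ w ∈ circuitWires T, v₂ w = v₁ w := by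
    intro w hw
    exact copy_not_target outW tgt w (fun k h => htgt_wires k (h ▸ hw)) v₁
  have hrev : ∀ w, execCircuit T.reverse v₁ w = v w := by
    intro w; rw [hv₁, execCircuit_reverse T hwf v]
  have hcongr : ∀ w ∈ circuitWires T, execCircuit T.reverse v₂ w = v w := by
    intro w hw
    rw [execCircuit_congr T.reverse (circuitWires T)
      (by rw [circuitWires_reverse]) v₂ v₁ hagree w hw, hrev]
  refine ⟨?_, ?_, ?_⟩
  · intro i
    rw [hsplit]
    by_cases hmem : inW i ∈ circuitWires T
    · rw [hcongr _ hmem]; exact hvin i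
    · rw [execCircuit_not_mem_wires T.reverse _ (by rwa [circuitWires_reverse]), hv₂,
        copy_not_target outW tgt _ (fun k h => htgt_in k ⟨i, h⟩)]
      exact hin1 i
  · intro k
    rw [hsplit,
      execCircuit_not_mem_wires T.reverse _
        (by rw [circuitWires_reverse]; exact htgt_wires k),
      hv₂, copy_target outW tgt htgt_inj htgt_out k v₁, hout1 k, hv₁,
      execCircuit_not_mem_wires T _ (htgt_wires k), hvtgt k]
  · intro w hw hnin
    rw [hsplit, hcongr _ hw]
    exact hvaux w hw hnin
end
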